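/- Let B = M₂(ℂ) and let ρ be the state ρ(x) = x₁₁ (compression to the (1,1) entry). Then the constant sequence g_n := e₁₂ and the sequence f_n := (1 + (−1)^n) e₂₂ (where e_{ij} are the matrix units) are bounded sequences in B that are both Cauchy with respect to ‖·‖_{ρ,#}, but the product sequence g_n f_n = (1 + (−1)^n) e₁₂ is not Cauchy with respect to ‖·‖_{ρ,#}. In particular, for a non-faithful state ρ the set S_{B,ρ} of ‖·‖_{ρ,#}-Cauchy bounded sequences need not be closed under multiplication. -/

import Mathlib

/-!
STATEMENT 3: In `B = M₂(ℂ)` with the (non-faithful) state `ρ(x) = x₁₁`, the constant sequence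
`g_n = e₁₂` and the sequence `f_n = (1 + (−1)^n) e₂₂` are bounded and `‖·‖_{ρ,#}`-Cauchy, but
their product `g_n f_n = (1 + (−1)^n) e₁₂` is not `‖·‖_{ρ,#}`-Cauchy.
-/

noncomputable section

theorem statement3 :
    -- matrix units
    let e : Fin 2 → Fin 2 → Matrix (Fin 2) (Fin 2) ℂ := fun i j => Matrix.single i j 1
    -- the state `ρ`: compression to the (1,1) corner
    let ρ : Matrix (Fin 2) (Fin 2) ℂ → ℂ := fun x => x 0 0
    -- the `(ρ,#)`-seminorm `‖a‖_{ρ,#} = (√(ρ(a* a)) + √(ρ(a a*)))/2`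
    let rhoSharp : Matrix (Fin 2) (Fin 2) ℂ → ℝ := fun a =>
      (Real.sqrt (ρ (star a * a)).re + Real.sqrt (ρ (a * star a)).re) / 2
    let g : ℕ → Matrix (Fin 2) (Fin 2) ℂ := fun _ => e 0 1
    let f : ℕ → Matrix (Fin 2) (Fin 2) ℂ := fun n => (1 + (-1 : ℂ) ^ n) • e 1 1
    -- `g` and `f` are bounded sequences
    (∃ M : ℝ, ∀ (n : ℕ) (i j : Fin 2), ‖g n i j‖ ≤ M) ∧
    (∃ M : ℝ, ∀ (n : ℕ) (i j : Fin 2), ‖f n i j‖ ≤ M) ∧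
    -- `g` is `(ρ,#)`-Cauchy
    (∀ ε > (0 : ℝ), ∃ N : ℕ, ∀ m ≥ N, ∀ k ≥ N, rhoSharp (g m - g k) < ε) ∧
    -- `f` is `(ρ,#)`-Cauchy
    (∀ ε > (0 : ℝ), ∃ N : ℕ, ∀ m ≥ N, ∀ k ≥ N, rhoSharp (f m - f k) < ε) ∧
    -- the product sequence is `(1 + (−1)^n) e₁₂` ...
    (∀ n : ℕ, g n * f n = (1 + (-1 : ℂ) ^ n) • e 0 1) ∧
    -- ... and it is not `(ρ,#)`-Cauchy
    ¬ (∀ ε > (0 : ℝ), ∃ N : ℕ, ∀ m ≥ N, ∀ k ≥ N, rhoSharp (g m * f m - g k * f k) < ε) := by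
  intro e ρ rhoSharp g f
  have hb : ∀ (n : ℕ) (i j : Fin 2), ‖g n i j‖ ≤ 1 := by
    intro n i j
    fin_cases i <;> fin_cases j <;>
      simp [g, e, Matrix.single]
  have hfb : ∀ (n : ℕ) (i j : Fin 2), ‖f n i j‖ ≤ 2 := by
    intro n i j
    have habs : ‖(1 + (-1 : ℂ) ^ n)‖ ≤ 2 := by
      calc ‖(1 + (-1 : ℂ) ^ n)‖ ≤ ‖(1 : ℂ)‖ + ‖(-1 : ℂ) ^ n‖ := norm_add_le _ _
      _ ≤ 2 := by norm_num
    fin_cases i <;> fin_cases j <;>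
      simp [f, e, Matrix.single] <;>
      simpa using habs
  refine ⟨⟨1, hb⟩, ⟨2, hfb⟩, ?_, ?_, ?_, ?_⟩
  · intro ε hε
    refine ⟨0, fun m _ k _ => ?_⟩
    have hz : g m - g k = 0 := sub_self _
    simpa [rhoSharp, hz, ρ] using hε
  · intro ε hε
    refine ⟨0, fun m _ k _ => ?_⟩
    have h1 : f m - f k = ((-1 : ℂ) ^ m - (-1 : ℂ) ^ k) • e 1 1 := by
      simp [f, smul_smul, ← sub_smul]
    have h2 : ρ (star (f m - f k) * (f m - f k)) = 0 := by
      rw [h1]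
      simp [ρ, e, Matrix.mul_apply, Fin.sum_univ_two, Matrix.single,
        Matrix.conjTranspose_apply]
    have h3 : ρ ((f m - f k) * star (f m - f k)) = 0 := by
      rw [h1]
      simp [ρ, e, Matrix.mul_apply, Fin.sum_univ_two, Matrix.single,
        Matrix.conjTranspose_apply]
    simp only [rhoSharp, h2, h3]
    simpa using hε
  · intro n
    have : e 0 1 * e 1 1 = e 0 1 := by
      simp [e, Matrix.single_mul_single_same]
    simp [g, f, Matrix.mul_smul, this]
  · intro h
    obtain ⟨N, hN⟩ := h 1 one_pos
    have hm := hN (2 * N) (by omega) (2 * N + 1) (by omega)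
    have hgf : ∀ n : ℕ, g n * f n = (1 + (-1 : ℂ) ^ n) • e 0 1 := by
      intro n
      have : e 0 1 * e 1 1 = e 0 1 := by
        simp [e, Matrix.single_mul_single_same]
      simp [g, f, Matrix.mul_smul, this]
    have hd : g (2*N) * f (2*N) - g (2*N+1) * f (2*N+1) = (2 : ℂ) • e 0 1 := by
      rw [hgf, hgf]
      have h1 : ((-1 : ℂ)) ^ (2*N) = 1 := by
        rw [pow_mul]; norm_num
      have h2 : ((-1 : ℂ)) ^ (2*N+1) = -1 := by
        rw [pow_succ, pow_mul]; norm_num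
      rw [h1, h2]
      norm_num
    rw [hd] at hm
    have e1 : ρ (star ((2 : ℂ) • e 0 1) * ((2 : ℂ) • e 0 1)) = 0 := by
      simp [ρ, e, Matrix.mul_apply, Fin.sum_univ_two, Matrix.single,
        Matrix.conjTranspose_apply]
    have e2 : ρ (((2 : ℂ) • e 0 1) * star ((2 : ℂ) • e 0 1)) = 4 := by
      simp [ρ, e, Matrix.mul_apply, Fin.sum_univ_two, Matrix.single,
        Matrix.conjTranspose_apply]
      norm_num [Complex.ext_iff]
    simp only [rhoSharp, e1, e2] at hm
    have h4 : Real.sqrt 4 = 2 := by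
      rw [show (4:ℝ) = 2^2 by norm_num, Real.sqrt_sq (by norm_num : (0:ℝ) ≤ 2)]
    norm_num [h4] at hm
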